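/- Let a = (a_n), b = (b_n) ∈ ℓ₁. Then a ⊥_B b if and only if |Σ_{n} conj(sgn(a_n)) b_n| ≤ Σ_{n : a_n = 0} |b_n|. -/

import Mathlib

open ENNReal

/-- The sign of a scalar: `z/|z|` for `z ≠ 0` and `0` for `z = 0`. -/
noncomputable def sgn {𝕂 : Type*} [RCLike 𝕂] (z : 𝕂) : 𝕂 :=
  if z = 0 then 0 else z / (‖z‖ : 𝕂)

section Aux

variable {𝕂 : Type*} [RCLike 𝕂]

open RCLike

lemma sgn_zero : sgn (0 : 𝕂) = 0 := by simp [sgn]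

lemma norm_sgn_le (z : 𝕂) : ‖sgn z‖ ≤ 1 := by
  unfold sgn
  split_ifs with h
  · simp
  · rw [norm_div, RCLike.norm_ofReal, abs_norm, div_self (norm_ne_zero_iff.2 h)]

lemma conj_sgn_mul_self (z : 𝕂) : (starRingEnd 𝕂) (sgn z) * z = (‖z‖ : 𝕂) := by
  unfold sgn
  split_ifs with h
  · simp [h]
  · rw [map_div₀, RCLike.conj_ofReal, div_mul_eq_mul_div, mul_comm, RCLike.mul_conj]
    rw [sq, mul_div_assoc, div_self (by exact_mod_cast norm_ne_zero_iff.2 h), mul_one]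

lemma re_div_ofReal (x : 𝕂) (u : ℝ) : RCLike.re (x / (u : 𝕂)) = RCLike.re x / u := by
  rw [div_eq_mul_inv, ← RCLike.ofReal_inv, mul_comm, ← RCLike.real_smul_eq_coe_mul,
    RCLike.smul_re, div_eq_mul_inv, mul_comm]

/-- Lower bound: `‖z‖ + re(conj(sgn z) * w) + [z = 0] ‖w‖ ≤ ‖z + w‖`. -/
lemma key_lower (z w : 𝕂) :
    ‖z‖ + RCLike.re ((starRingEnd 𝕂) (sgn z) * w) + (if z = 0 then ‖w‖ else 0)
      ≤ ‖z + w‖ := by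
  by_cases h : z = 0
  · simp [h, sgn_zero]
  · rw [if_neg h, add_zero]
    have h1 : ‖z‖ + RCLike.re ((starRingEnd 𝕂) (sgn z) * w)
        = RCLike.re ((starRingEnd 𝕂) (sgn z) * (z + w)) := by
      rw [mul_add, map_add, conj_sgn_mul_self, RCLike.ofReal_re]
    rw [h1]
    calc RCLike.re ((starRingEnd 𝕂) (sgn z) * (z + w))
        ≤ ‖(starRingEnd 𝕂) (sgn z) * (z + w)‖ := RCLike.re_le_norm _
      _ = ‖sgn z‖ * ‖z + w‖ := by rw [norm_mul, RCLike.norm_conj]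
      _ ≤ 1 * ‖z + w‖ := by
          exact mul_le_mul_of_nonneg_right (norm_sgn_le z) (norm_nonneg _)
      _ = ‖z + w‖ := one_mul _

/-- Upper bound for nonzero `z`. -/
lemma key_upper {z : 𝕂} (w : 𝕂) (hz : z ≠ 0) :
    ‖z + w‖ ≤ ‖z‖ + RCLike.re ((starRingEnd 𝕂) (sgn z) * w) + ‖w‖ ^ 2 / (2 * ‖z‖) := by
  have hu : (0 : ℝ) < ‖z‖ := norm_pos_iff.2 hz
  set u := ‖z‖ with hudef
  set R := RCLike.re ((starRingEnd 𝕂) z * w) with hR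
  have hre : RCLike.re ((starRingEnd 𝕂) (sgn z) * w) = R / u := by
    unfold sgn
    rw [if_neg hz, map_div₀, RCLike.conj_ofReal, div_mul_eq_mul_div, re_div_ofReal]
  have hsq : ‖z + w‖ ^ 2 = u ^ 2 + 2 * R + ‖w‖ ^ 2 := by
    have := norm_add_sq (𝕜 := 𝕂) z w
    rw [RCLike.inner_apply, mul_comm w] at this
    exact this
  have hX : (0 : ℝ) ≤ ‖z + w‖ := norm_nonneg _
  have key : u * ‖z + w‖ ≤ u ^ 2 + R + ‖w‖ ^ 2 / 2 := by
    nlinarith [sq_nonneg (u - ‖z + w‖)]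
  rw [hre]
  have heq : u + R / u + ‖w‖ ^ 2 / (2 * u) = (u ^ 2 + R + ‖w‖ ^ 2 / 2) / u := by
    field_simp
  rw [heq, le_div_iff₀ hu]
  linarith [key, mul_comm u ‖z + w‖]

end Aux

set_option maxHeartbeats 1000000 in
theorem ell1_BJ_orthogonality {𝕂 : Type*} [RCLike 𝕂]
    (a b : lp (fun _ : ℕ => 𝕂) 1) :
    (∀ lam : 𝕂, ‖a‖ ≤ ‖a + lam • b‖) ↔
      ‖∑' n : ℕ, (starRingEnd 𝕂) (sgn (a n)) * b n‖ ≤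
        ∑' n : {n : ℕ // a n = 0}, ‖b (n : ℕ)‖ := by
  have hp : (0 : ℝ) < (1 : ℝ≥0∞).toReal := by norm_num
  have hnorm1 : ∀ f : lp (fun _ : ℕ => 𝕂) 1, HasSum (fun n => ‖f n‖) ‖f‖ := by
    intro f
    have := lp.hasSum_norm hp f
    simpa using this
  have hA : HasSum (fun n => ‖a n‖) ‖a‖ := hnorm1 a
  have hBsum : Summable (fun n => ‖b n‖) := (hnorm1 b).summable
  set c : ℕ → 𝕂 := fun n => (starRingEnd 𝕂) (sgn (a n)) * b n with hc_def
  have hc_norm : ∀ n, ‖c n‖ ≤ ‖b n‖ := by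
    intro n
    rw [hc_def]
    calc ‖(starRingEnd 𝕂) (sgn (a n)) * b n‖ = ‖sgn (a n)‖ * ‖b n‖ := by
          rw [norm_mul, RCLike.norm_conj]
      _ ≤ 1 * ‖b n‖ := mul_le_mul_of_nonneg_right (norm_sgn_le _) (norm_nonneg _)
      _ = ‖b n‖ := one_mul _
  have hc : Summable c := Summable.of_norm_bounded hBsum hc_norm
  set S : 𝕂 := ∑' n, c n with hS_def
  have hS : HasSum c S := hc.hasSum
  set ind : ℕ → ℝ := fun n => if a n = 0 then ‖b n‖ else 0 with hind_def
  have hind_nonneg : ∀ n, 0 ≤ ind n := by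
    intro n; rw [hind_def]; dsimp only; split_ifs <;> simp [norm_nonneg]
  have hind_le : ∀ n, ind n ≤ ‖b n‖ := by
    intro n; rw [hind_def]; dsimp only; split_ifs <;> simp [norm_nonneg]
  have hind_sum : Summable ind :=
    Summable.of_norm_bounded hBsum (fun n => by
      rw [Real.norm_eq_abs, abs_of_nonneg (hind_nonneg n)]; exact hind_le n)
  set T : ℝ := ∑' n : {n : ℕ // a n = 0}, ‖b (n : ℕ)‖ with hT_def
  have hT : HasSum ind T := by
    have hsub : Summable (fun n : {n : ℕ // a n = 0} => ‖b (n : ℕ)‖) :=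
      hBsum.subtype {n : ℕ | a n = 0}
    have h1 : HasSum ((fun n => ‖b n‖) ∘ (Subtype.val : {n : ℕ | a n = 0} → ℕ)) T :=
      hsub.hasSum
    have h2 := hasSum_subtype_iff_indicator.mp h1
    have : ({n : ℕ | a n = 0}).indicator (fun n => ‖b n‖) = ind := by
      rw [hind_def]
      funext n
      simp only [Set.indicator_apply, Set.mem_setOf_eq]
    rwa [this] at h2
  have hT_nonneg : 0 ≤ T := hT.nonneg hind_nonneg
  have hcoe : ∀ (lam : 𝕂) (n : ℕ), (a + lam • b) n = a n + lam * b n := by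
    intro lam n
    have h1 : (↑(a + lam • b) : ∀ _ : ℕ, 𝕂) = ↑a + lam • ↑b := by
      rw [lp.coeFn_add, lp.coeFn_smul]
    have := congrFun h1 n
    simpa [smul_eq_mul] using this
  have hab : ∀ lam : 𝕂, HasSum (fun n => ‖a n + lam * b n‖) ‖a + lam • b‖ := by
    intro lam
    have h0 := hnorm1 (a + lam • b)
    have heq : (fun n => ‖(a + lam • b) n‖) = fun n => ‖a n + lam * b n‖ := by
      funext n; rw [hcoe lam n]
    rwa [heq] at h0
  constructor
  · -- B-J orthogonality implies the inequality
    intro h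
    by_contra hlt
    push_neg at hlt
    set ε : ℝ := (‖S‖ - T) / 4 with hε_def
    have hε : 0 < ε := by rw [hε_def]; linarith
    -- find finite set with small tail
    obtain ⟨F, hF⟩ : ∃ F : Finset ℕ,
        ∑' n : {x : ℕ // x ∉ F}, ‖b (n : ℕ)‖ < ε := by
      have := (tendsto_order.1
        (tendsto_tsum_compl_atTop_zero (fun n => ‖b n‖))).2 ε hε
      exact this.exists
    have hcompl_eq : ∀ g : ℕ → ℝ, (∑' n : ↑((↑F : Set ℕ)ᶜ), g (n : ℕ))
        = ∑' n : {x : ℕ // x ∉ F}, g (n : ℕ) := by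
      intro g
      calc ∑' n : ↑((↑F : Set ℕ)ᶜ), g (n : ℕ)
          = ∑' x, ((↑F : Set ℕ)ᶜ).indicator g x := tsum_subtype _ g
        _ = ∑' x, ({x : ℕ | x ∉ F}).indicator g x :=
            tsum_congr (fun x => by simp [Set.indicator_apply])
        _ = ∑' n : {x : ℕ // x ∉ F}, g (n : ℕ) := (tsum_subtype {x : ℕ | x ∉ F} g).symm
    set q : ℕ → ℝ := fun n => if a n = 0 then 0 else ‖b n‖ ^ 2 / (2 * ‖a n‖) with hq_def
    have hq_nonneg : ∀ n, 0 ≤ q n := by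
      intro n; rw [hq_def]; dsimp only; split_ifs with h'
      · exact le_rfl
      · positivity
    set C : ℝ := ∑ n ∈ F, q n with hC_def
    have hC : 0 ≤ C := Finset.sum_nonneg fun n _ => hq_nonneg n
    have hS0 : S ≠ 0 := by
      intro h0
      rw [h0, norm_zero] at hlt
      linarith
    have hSnorm : (0 : ℝ) < ‖S‖ := norm_pos_iff.2 hS0
    set t : ℝ := min 1 (ε / (C + 1)) with ht_def
    have ht : 0 < t := lt_min one_pos (by positivity)
    have htC : t * C ≤ ε := by
      have h1 : t ≤ ε / (C + 1) := min_le_right _ _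
      have h2 : t * C ≤ (ε / (C + 1)) * C := mul_le_mul_of_nonneg_right h1 hC
      have h3 : (ε / (C + 1)) * C ≤ ε := by
        rw [div_mul_eq_mul_div, div_le_iff₀ (by linarith)]
        nlinarith
      linarith
    set lam : 𝕂 := -(t : 𝕂) * (starRingEnd 𝕂) S / (‖S‖ : 𝕂) with hlam_def
    have hlam_norm : ‖lam‖ = t := by
      rw [hlam_def, norm_div, norm_mul, norm_neg, RCLike.norm_ofReal,
        RCLike.norm_conj, RCLike.norm_ofReal, abs_of_pos ht, abs_norm]
      field_simp
    have hlamS : RCLike.re (lam * S) = -(t * ‖S‖) := by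
      have h1 : lam * S = ((-(t * ‖S‖) : ℝ) : 𝕂) := by
        rw [hlam_def, div_mul_eq_mul_div, mul_assoc, RCLike.conj_mul]
        push_cast
        rw [div_eq_iff (by exact_mod_cast hSnorm.ne')]
        ring
      rw [h1, RCLike.ofReal_re]
    -- the difference function
    set d : ℕ → ℝ := fun n => ‖a n + lam * b n‖ - ‖a n‖ with hd_def
    have habs := hab lam
    have hd_sum : HasSum d (‖a + lam • b‖ - ‖a‖) := habs.sub hA
    have hd : Summable d := hd_sum.summable
    have hd_bound : ∀ n, |d n| ≤ t * ‖b n‖ := by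
      intro n
      rw [hd_def]
      have := abs_norm_sub_norm_le (a n + lam * b n) (a n)
      simp only [add_sub_cancel_left] at this
      calc |‖a n + lam * b n‖ - ‖a n‖| ≤ ‖lam * b n‖ := this
        _ = t * ‖b n‖ := by rw [norm_mul, hlam_norm]
    -- tail bound
    have htail_le : ∑' n : ↑((↑F : Set ℕ)ᶜ), d (n : ℕ) ≤ t * ε := by
      have h1 : ∑' n : ↑((↑F : Set ℕ)ᶜ), d (n : ℕ)
          ≤ ∑' n : ↑((↑F : Set ℕ)ᶜ), t * ‖b (n : ℕ)‖ := by
        apply Summable.tsum_le_tsum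
        · intro n
          exact le_of_abs_le (hd_bound n)
        · exact hd.subtype _
        · exact (hBsum.mul_left t).subtype _
      have h2 : ∑' n : ↑((↑F : Set ℕ)ᶜ), t * ‖b (n : ℕ)‖
          = t * ∑' n : ↑((↑F : Set ℕ)ᶜ), ‖b (n : ℕ)‖ := tsum_mul_left
      have h3 := hcompl_eq (fun n => ‖b n‖)
      have h4 : t * ∑' n : {x : ℕ // x ∉ F}, ‖b (n : ℕ)‖ ≤ t * ε :=
        mul_le_mul_of_nonneg_left hF.le ht.le
      rw [h2, h3] at h1
      linarith
    -- summability of the re-part and its tail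
    have hre_hasSum : HasSum (fun n => RCLike.re (lam * c n)) (RCLike.re (lam * S)) := by
      have := (hS.mul_left lam).mapL RCLike.reCLM
      simpa using this
    have hre_sum : Summable (fun n => RCLike.re (lam * c n)) := hre_hasSum.summable
    have hre_tail : -(t * ε) ≤ ∑' n : ↑((↑F : Set ℕ)ᶜ), RCLike.re (lam * c (n : ℕ)) := by
      have h1 : ∑' n : ↑((↑F : Set ℕ)ᶜ), (-(t * ‖b (n : ℕ)‖))
          ≤ ∑' n : ↑((↑F : Set ℕ)ᶜ), RCLike.re (lam * c (n : ℕ)) := by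
        apply Summable.tsum_le_tsum
        · intro n
          have h2 : |RCLike.re (lam * c (n : ℕ))| ≤ t * ‖b (n : ℕ)‖ := by
            calc |RCLike.re (lam * c (n : ℕ))| ≤ ‖lam * c (n : ℕ)‖ :=
                RCLike.abs_re_le_norm _
              _ = t * ‖c (n : ℕ)‖ := by rw [norm_mul, hlam_norm]
              _ ≤ t * ‖b (n : ℕ)‖ := mul_le_mul_of_nonneg_left (hc_norm _) ht.le
          linarith [neg_abs_le (RCLike.re (lam * c (n : ℕ))), abs_nonneg (RCLike.re (lam * c (n : ℕ)))]
        · exact ((hBsum.mul_left t).subtype _).neg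
        · exact hre_sum.subtype _
      have h2 : ∑' n : ↑((↑F : Set ℕ)ᶜ), (-(t * ‖b (n : ℕ)‖))
          = -(t * ∑' n : ↑((↑F : Set ℕ)ᶜ), ‖b (n : ℕ)‖) := by
        rw [tsum_neg, tsum_mul_left]
      have h3 := hcompl_eq (fun n => ‖b n‖)
      have h4 : t * ∑' n : {x : ℕ // x ∉ F}, ‖b (n : ℕ)‖ ≤ t * ε :=
        mul_le_mul_of_nonneg_left hF.le ht.le
      rw [h2, h3] at h1
      linarith
    -- finite-part splits
    have hre_split := Summable.sum_add_tsum_compl (s := F) hre_sum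
    have hd_split := Summable.sum_add_tsum_compl (s := F) hd
    -- finite-part pointwise bound
    have hfin_pt : ∀ n ∈ F, d n ≤ RCLike.re (lam * c n) + t * ind n + t ^ 2 * q n := by
      intro n _
      by_cases hn : a n = 0
      · have hcn : c n = 0 := by rw [hc_def]; simp [hn, sgn_zero]
        have hdn : d n = t * ‖b n‖ := by
          rw [hd_def]; dsimp only
          rw [hn, zero_add, norm_zero, sub_zero, norm_mul, hlam_norm]
        rw [hdn, hcn, mul_zero, map_zero, hind_def, hq_def]
        simp [hn]
      · have hk := key_upper (lam * b n) hn
        have hre_eq : (starRingEnd 𝕂) (sgn (a n)) * (lam * b n) = lam * c n := by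
          rw [hc_def]; ring
        rw [hre_eq] at hk
        have hnorm_eq : ‖lam * b n‖ ^ 2 = t ^ 2 * ‖b n‖ ^ 2 := by
          rw [norm_mul, hlam_norm, mul_pow]
        rw [hd_def]; dsimp only
        rw [hind_def, hq_def]; simp only [hn, if_false, mul_zero, add_zero]
        have : ‖lam * b n‖ ^ 2 / (2 * ‖a n‖) = t ^ 2 * (‖b n‖ ^ 2 / (2 * ‖a n‖)) := by
          rw [hnorm_eq]; ring
        linarith [hk, this.symm.le, this.le]
    have hfin : ∑ n ∈ F, d n ≤ ∑ n ∈ F, RCLike.re (lam * c n) + t * T + t ^ 2 * C := by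
      have h1 : ∑ n ∈ F, d n
          ≤ ∑ n ∈ F, (RCLike.re (lam * c n) + t * ind n + t ^ 2 * q n) :=
        Finset.sum_le_sum hfin_pt
      rw [Finset.sum_add_distrib, Finset.sum_add_distrib, ← Finset.mul_sum,
        ← Finset.mul_sum] at h1
      have h2 : ∑ n ∈ F, ind n ≤ T := by
        rw [← hT.tsum_eq]
        exact Summable.sum_le_tsum F (fun n _ => hind_nonneg n) hT.summable
      have h3 : t * ∑ n ∈ F, ind n ≤ t * T := mul_le_mul_of_nonneg_left h2 ht.le
      rw [hC_def]
      linarith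
    -- bound on the finite re-sum
    have hre_fin : ∑ n ∈ F, RCLike.re (lam * c n) ≤ -(t * ‖S‖) + t * ε := by
      have h1 : ∑ n ∈ F, RCLike.re (lam * c n)
          = RCLike.re (lam * S) - ∑' n : ↑((↑F : Set ℕ)ᶜ), RCLike.re (lam * c (n : ℕ)) := by
        have := hre_split
        rw [hre_hasSum.tsum_eq] at this
        linarith
      rw [h1, hlamS]
      linarith [hre_tail]
    -- combine
    have hd_total : ∑' n, d n < 0 := by
      have h1 : ∑' n, d n = ∑ n ∈ F, d n + ∑' n : ↑((↑F : Set ℕ)ᶜ), d (n : ℕ) :=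
        hd_split.symm
      have ht2C : t ^ 2 * C ≤ t * ε := by
        have : t ^ 2 * C = t * (t * C) := by ring
        rw [this]
        exact mul_le_mul_of_nonneg_left htC ht.le
      have hfinal : ∑' n, d n ≤ -(t * ‖S‖) + t * ε + t * T + t * ε + t * ε := by
        rw [h1]
        linarith [hfin, htail_le, hre_fin, ht2C]
      have : -(t * ‖S‖) + t * ε + t * T + t * ε + t * ε = t * (T - ‖S‖ + 3 * ε) := by ring
      rw [this] at hfinal
      have h5 : T - ‖S‖ + 3 * ε = -ε := by rw [hε_def]; ring
      rw [h5] at hfinal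
      have : t * -ε < 0 := by
        apply mul_neg_of_pos_of_neg ht
        linarith
      linarith
    have : ‖a + lam • b‖ - ‖a‖ < 0 := by
      rw [← hd_sum.tsum_eq]
      exact hd_total
    have := h lam
    linarith
  · -- the inequality implies B-J orthogonality
    intro h lam
    have hpt : ∀ n, ‖a n‖ + RCLike.re (lam * c n) + ‖lam‖ * ind n
        ≤ ‖a n + lam * b n‖ := by
      intro n
      have hk := key_lower (a n) (lam * b n)
      have hre_eq : (starRingEnd 𝕂) (sgn (a n)) * (lam * b n) = lam * c n := by
        rw [hc_def]; ring
      rw [hre_eq] at hk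
      have hif : (if a n = 0 then ‖lam * b n‖ else 0) = ‖lam‖ * ind n := by
        rw [hind_def]; dsimp only
        split_ifs with h'
        · rw [norm_mul]
        · rw [mul_zero]
      rw [hif] at hk
      exact hk
    have hre_hasSum : HasSum (fun n => RCLike.re (lam * c n)) (RCLike.re (lam * S)) := by
      have := (hS.mul_left lam).mapL RCLike.reCLM
      simpa using this
    have hlhs : HasSum (fun n => ‖a n‖ + RCLike.re (lam * c n) + ‖lam‖ * ind n)
        (‖a‖ + RCLike.re (lam * S) + ‖lam‖ * T) :=
      (hA.add hre_hasSum).add (hT.mul_left ‖lam‖)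
    have hle : ‖a‖ + RCLike.re (lam * S) + ‖lam‖ * T ≤ ‖a + lam • b‖ :=
      hasSum_le hpt hlhs (hab lam)
    have h1 : -(‖lam‖ * ‖S‖) ≤ RCLike.re (lam * S) := by
      have h2 : |RCLike.re (lam * S)| ≤ ‖lam * S‖ := RCLike.abs_re_le_norm _
      rw [norm_mul] at h2
      linarith [neg_abs_le (RCLike.re (lam * S))]
    have h3 : ‖lam‖ * ‖S‖ ≤ ‖lam‖ * T := mul_le_mul_of_nonneg_left h (norm_nonneg _)
    linarith
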